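/- (Monotonicity of normal-mixture fdr in a symmetric two-sided alternative.) Consider the model δ = 0 with probability π_0 and δ ~ (1/2)N(μ, σ²) + (1/2)N(−μ, σ²) with probability 1 − π_0 (μ > 0, σ² ≥ 0), with z | δ ~ N(δ, 1). Then fdr(z) = π_0 φ(z)/f(z) is a symmetric function of z that is strictly decreasing in |z|, where φ is the standard normal density and f(z) = π_0 φ(z) + (1−π_0)[φ(z; μ, σ²+1) + φ(z; −μ, σ²+1)]/2. -/

import Mathlib

open MeasureTheory Real Set

/-- The normal density `φ(x; μ, σ²)`. -/
noncomputable def normPdf (m v x : ℝ) : ℝ :=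
  Real.exp (-(x - m) ^ 2 / (2 * v)) / Real.sqrt (2 * Real.pi * v)

/-- Monotonicity of normal-mixture fdr in a symmetric two-sided alternative:
with `δ = 0` w.p. `p0 ∈ (0,1)` and `δ ~ (1/2)N(m, v) + (1/2)N(−m, v)` w.p. `1 − p0`
(`m > 0`, `v ≥ 0`), and `z | δ ~ N(δ, 1)`, the local false discovery rate
`fdr(z) = p0 φ(z)/f(z)` with
`f(z) = p0 φ(z) + (1−p0)[φ(z; m, v+1) + φ(z; −m, v+1)]/2`
is symmetric in `z` and strictly decreasing in `|z|`. -/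
theorem stmt_15 (p0 m v : ℝ) (hp0 : 0 < p0 ∧ p0 < 1) (hm : 0 < m) (hv : 0 ≤ v)
    (f fdr : ℝ → ℝ)
    (hf : ∀ z, f z = p0 * normPdf 0 1 z
        + (1 - p0) * (normPdf m (v + 1) z + normPdf (-m) (v + 1) z) / 2)
    (hfdr : ∀ z, fdr z = p0 * normPdf 0 1 z / f z) :
    (∀ z, fdr z = fdr (-z)) ∧ StrictAntiOn fdr (Ici 0) := by
  obtain ⟨hp1, hp2⟩ := hp0
  set w : ℝ := v + 1 with hwdef
  have hw : 0 < w := by positivity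
  have hw1 : 1 ≤ w := by simp [hwdef]; linarith
  have hpi := Real.pi_pos
  have hS : 0 < Real.sqrt (2 * Real.pi * w) := Real.sqrt_pos.2 (by positivity)
  have hS0 : 0 < Real.sqrt (2 * Real.pi * 1) := Real.sqrt_pos.2 (by positivity)
  set a : ℝ := (w - 1) / (2 * w) with hadef
  have ha : 0 ≤ a := div_nonneg (by linarith) (by linarith)
  set b : ℝ := m / w with hbdef
  have hb : 0 < b := div_pos hm hw
  set c : ℝ := Real.exp (-m ^ 2 / (2 * w)) * Real.sqrt (2 * Real.pi * 1)
      / Real.sqrt (2 * Real.pi * w) with hcdef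
  have hc : 0 < c := by positivity
  set E : ℝ → ℝ := fun z => Real.exp (a * z ^ 2) * (2 * Real.cosh (b * z)) with hE
  have hEpos : ∀ z, 0 < E z := by
    intro z
    have := Real.cosh_pos (b * z)
    positivity
  have key : ∀ z, normPdf m w z + normPdf (-m) w z = normPdf 0 1 z * (c * E z) := by
    intro z
    have hA : Real.exp (-(z - m) ^ 2 / (2 * w)) =
        Real.exp (-(z - 0) ^ 2 / (2 * 1)) *
          (Real.exp (-m ^ 2 / (2 * w)) * (Real.exp (a * z ^ 2) * Real.exp (b * z))) := by
      rw [← Real.exp_add, ← Real.exp_add, ← Real.exp_add]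
      congr 1
      rw [hadef, hbdef]
      field_simp [hadef, hbdef]
      ring
    have hB : Real.exp (-(z - -m) ^ 2 / (2 * w)) =
        Real.exp (-(z - 0) ^ 2 / (2 * 1)) *
          (Real.exp (-m ^ 2 / (2 * w)) * (Real.exp (a * z ^ 2) * Real.exp (-(b * z)))) := by
      rw [← Real.exp_add, ← Real.exp_add, ← Real.exp_add]
      congr 1
      rw [hadef, hbdef]
      field_simp [hadef, hbdef]
      ring
    simp only [normPdf, hE, hcdef, Real.cosh_eq]
    rw [hA, hB]
    field_simp
  have hphi : ∀ z, 0 < normPdf 0 1 z := by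
    intro z
    unfold normPdf
    positivity
  have hD : ∀ z, 0 < p0 + (1 - p0) * (c * E z) / 2 := by
    intro z
    have := hEpos z
    have h1 : 0 < 1 - p0 := by linarith
    positivity
  have hfdr2 : ∀ z, fdr z = p0 / (p0 + (1 - p0) * (c * E z) / 2) := by
    intro z
    have hfz : f z = normPdf 0 1 z * (p0 + (1 - p0) * (c * E z) / 2) := by
      rw [hf z, key z]; ring
    rw [hfdr z, hfz]
    rw [mul_comm (normPdf 0 1 z)]
    exact mul_div_mul_right _ _ (hphi z).ne'
  have hEeven : ∀ z, E (-z) = E z := by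
    intro z
    simp [hE, mul_neg, Real.cosh_neg, neg_sq]
  constructor
  · intro z
    rw [hfdr2 z, hfdr2 (-z), hEeven z]
  · intro x hx y hy hxy
    rw [hfdr2 x, hfdr2 y]
    apply div_lt_div_of_pos_left hp1 (hD x)
    have hEx : E x < E y := by
      have h1 : Real.exp (a * x ^ 2) ≤ Real.exp (a * y ^ 2) := by
        apply Real.exp_le_exp.2
        have : x ^ 2 ≤ y ^ 2 := by nlinarith [mem_Ici.1 hx, mem_Ici.1 hy]
        nlinarith
      have h2 : Real.cosh (b * x) < Real.cosh (b * y) := by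
        rw [Real.cosh_lt_cosh]
        rw [abs_of_nonneg (mul_nonneg hb.le (mem_Ici.1 hx)),
          abs_of_nonneg (mul_nonneg hb.le (mem_Ici.1 hy))]
        exact mul_lt_mul_of_pos_left hxy hb
      have hcpos := Real.cosh_pos (b * x)
      calc E x = Real.exp (a * x ^ 2) * (2 * Real.cosh (b * x)) := rfl
        _ < Real.exp (a * y ^ 2) * (2 * Real.cosh (b * y)) := by
            apply mul_lt_mul' h1 (by linarith) (by positivity) (Real.exp_pos _)
        _ = E y := rfl
    have h1 : 0 < 1 - p0 := by linarith
    have : (1 - p0) * (c * E x) / 2 < (1 - p0) * (c * E y) / 2 := by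
      apply div_lt_div_of_pos_right _ (by norm_num)
      exact mul_lt_mul_of_pos_left (mul_lt_mul_of_pos_left hEx hc) h1
    linarith
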